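/- For every x, v ∈ E, the function t ↦ f(x + t·v) has right derivative at t = 0 (derivative within [0,∞) at 0) equal to ⟨v, H(x)⟩ + μ({x})·‖v‖, and left derivative at t = 0 (derivative within (−∞,0] at 0) equal to ⟨v, H(x)⟩ − μ({x})·‖v‖. -/

import Mathlib

open MeasureTheory Metric
open scoped RealInnerProductSpace

lemma auxDeriv {E : Type*} [NormedAddCommGroup E] [InnerProductSpace ℝ E]
    (w v : E) (hw : w ≠ 0) :
    HasDerivAt (fun t : ℝ => ‖w + t • v‖) ⟪‖w‖⁻¹ • w, v⟫ 0 := by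
  have hu : HasDerivAt (fun t : ℝ => w + t • v) v 0 := by
    simpa using ((hasDerivAt_id (0 : ℝ)).smul_const v).const_add w
  have hq : HasDerivAt (fun t : ℝ => ⟪w + t • v, w + t • v⟫)
      (⟪w + (0:ℝ) • v, v⟫ + ⟪v, w + (0:ℝ) • v⟫) 0 := hu.inner ℝ hu
  have hq0 : (fun t : ℝ => ⟪w + t • v, w + t • v⟫) 0 ≠ 0 := by
    simpa using (inner_self_ne_zero (𝕜 := ℝ)).mpr hw
  have hs := hq.sqrt hq0
  have heq : (fun t : ℝ => Real.sqrt ⟪w + t • v, w + t • v⟫)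
      = fun t : ℝ => ‖w + t • v‖ := by
    funext t
    rw [real_inner_self_eq_norm_mul_norm, Real.sqrt_mul_self (norm_nonneg _)]
  rw [heq] at hs
  convert hs using 1
  have h1 : Real.sqrt ⟪w + (0:ℝ) • v, w + (0:ℝ) • v⟫ = ‖w‖ := by
    simp [real_inner_self_eq_norm_mul_norm, Real.sqrt_mul_self (norm_nonneg w)]
  have hwn : ‖w‖ ≠ 0 := norm_ne_zero_iff.mpr hw
  rw [h1, real_inner_smul_left]
  simp only [zero_smul, add_zero]
  rw [real_inner_comm v w]
  field_simp
  ring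

/-- Euclidean case of Proposition 2.4, one-sided derivatives.
With `f x = ∫ ‖x - p‖ dμ(p)` and `H x = ∫_{E∖{x}} (x-p)/‖x-p‖ dμ(p)`, for every `x, v`
the map `t ↦ f (x + t v)` has right derivative `⟪v, H x⟫ + μ{x}‖v‖` at `0` and left
derivative `⟪v, H x⟫ - μ{x}‖v‖` at `0`. -/
theorem stmt1 {n : ℕ} (hn : 1 ≤ n) (a : EuclideanSpace ℝ (Fin n)) (ρ : ℝ) (hρ : 0 < ρ)
    (μ : Measure (EuclideanSpace ℝ (Fin n))) [IsProbabilityMeasure μ]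
    (hsupp : {x : EuclideanSpace ℝ (Fin n) | ∀ U ∈ nhds x, 0 < μ U} ⊆ ball a ρ)
    (f : EuclideanSpace ℝ (Fin n) → ℝ)
    (hf : ∀ x, f x = ∫ p, ‖x - p‖ ∂μ)
    (H : EuclideanSpace ℝ (Fin n) → EuclideanSpace ℝ (Fin n))
    (hH : ∀ x, H x = ∫ p in ({x}ᶜ : Set (EuclideanSpace ℝ (Fin n))), ‖x - p‖⁻¹ • (x - p) ∂μ)
    (x v : EuclideanSpace ℝ (Fin n)) :
    HasDerivWithinAt (fun t : ℝ => f (x + t • v))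
      (⟪v, H x⟫ + (μ {x}).toReal * ‖v‖) (Set.Ici 0) 0 ∧
    HasDerivWithinAt (fun t : ℝ => f (x + t • v))
      (⟪v, H x⟫ - (μ {x}).toReal * ‖v‖) (Set.Iic 0) 0 := by
  set c : ℝ := (μ {x}).toReal with hc
  -- the complement of the ball is null
  have hnull : μ ((ball a ρ)ᶜ) = 0 := by
    apply measure_null_of_locally_null
    intro y hy
    have : y ∉ {x : EuclideanSpace ℝ (Fin n) | ∀ U ∈ nhds x, 0 < μ U} := fun h => hy (hsupp h)
    simp only [Set.mem_setOf_eq, not_forall] at this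
    obtain ⟨U, hU, hU0⟩ := this
    exact ⟨U, nhdsWithin_le_nhds hU, by simpa using hU0⟩
  have hball : ∀ᵐ p ∂μ, p ∈ ball a ρ := by
    rw [ae_iff]
    have : {p : EuclideanSpace ℝ (Fin n) | ¬ p ∈ ball a ρ} = (ball a ρ)ᶜ := rfl
    rw [this]
    exact hnull
  -- integrability of p ↦ ‖z - p‖
  have hInt : ∀ z : EuclideanSpace ℝ (Fin n), Integrable (fun p => ‖z - p‖) μ := by
    intro z
    refine Integrable.mono' (integrable_const (‖z - a‖ + ρ))
      ((continuous_const.sub continuous_id).norm.aestronglyMeasurable) ?_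
    filter_upwards [hball] with p hp
    have : ‖z - p‖ ≤ ‖z - a‖ + ‖a - p‖ := by
      simpa using norm_sub_le_norm_sub_add_norm_sub z a p
    have h2 : ‖a - p‖ ≤ ρ := by
      rw [← dist_eq_norm]
      exact (dist_comm a p ▸ (mem_ball.mp hp)).le
    simp only [Real.norm_eq_abs, abs_of_nonneg (norm_nonneg _)]
    linarith
  -- the unit vector field
  set G : EuclideanSpace ℝ (Fin n) → EuclideanSpace ℝ (Fin n) := fun p => ‖x - p‖⁻¹ • (x - p) with hG
  have hGmeas : Measurable G :=
    ((measurable_const.sub measurable_id).norm.inv).smul (measurable_const.sub measurable_id)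
  have hGbound : ∀ p, ‖G p‖ ≤ 1 := by
    intro p
    rw [hG, norm_smul, norm_inv, norm_norm]
    rcases eq_or_ne (x - p) 0 with h | h
    · simp [h]
    · rw [inv_mul_cancel₀ (norm_ne_zero_iff.mpr h)]
  have hGint : Integrable G (μ.restrict {x}ᶜ) :=
    Integrable.mono' (integrable_const 1) hGmeas.aestronglyMeasurable
      (Filter.Eventually.of_forall fun p => by simpa using hGbound p)
  -- derivative under the integral over {x}ᶜ
  have hmain : HasDerivAt (fun t : ℝ => ∫ p in ({x}ᶜ : Set (EuclideanSpace ℝ (Fin n))), ‖x + t • v - p‖ ∂μ)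
      (∫ p in ({x}ᶜ : Set (EuclideanSpace ℝ (Fin n))), ⟪v, G p⟫ ∂μ) 0 := by
    have key := hasDerivAt_integral_of_dominated_loc_of_lip
      (F := fun (t : ℝ) (p : EuclideanSpace ℝ (Fin n)) => ‖x + t • v - p‖)
      (F' := fun p => ⟪v, G p⟫) (μ := μ.restrict {x}ᶜ) (x₀ := 0)
      (bound := fun _ => ‖v‖) Filter.univ_mem
      (Filter.Eventually.of_forall fun t =>
        ((continuous_const.sub continuous_id).norm.aestronglyMeasurable))
      ?_ ?_ ?_ ?_ ?_
    · exact key.2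
    · -- integrability at t = 0
      simpa using (hInt x).restrict (s := {x}ᶜ)
    · -- F' measurable
      exact ((measurable_const.inner hGmeas)).aestronglyMeasurable
    · -- Lipschitz
      refine Filter.Eventually.of_forall fun p => ?_
      refine LipschitzWith.lipschitzOnWith ?_
      refine LipschitzWith.of_dist_le_mul fun s t => ?_
      have : (x + s • v - p) - (x + t • v - p) = (s - t) • v := by
        rw [sub_smul]; abel
      calc dist ‖x + s • v - p‖ ‖x + t • v - p‖
          ≤ dist (x + s • v - p) (x + t • v - p) := dist_norm_norm_le _ _
        _ = ‖(s - t) • v‖ := by rw [dist_eq_norm, this]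
        _ = |s - t| * ‖v‖ := by rw [norm_smul, Real.norm_eq_abs]
        _ = ↑(Real.nnabs ‖v‖) * dist s t := by
            rw [Real.coe_nnabs, abs_of_nonneg (norm_nonneg v), Real.dist_eq, mul_comm]
    · -- bound integrable
      exact (integrable_const ‖v‖).restrict
    · -- pointwise derivative
      filter_upwards [ae_restrict_mem (MeasurableSet.singleton x).compl] with p hp
      have hwp : x - p ≠ 0 := sub_ne_zero.mpr fun h => hp (h.symm ▸ rfl)
      have := auxDeriv (x - p) v hwp
      have heq : (fun t : ℝ => ‖(x - p) + t • v‖) = fun t : ℝ => ‖x + t • v - p‖ := by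
        funext t; congr 1; abel
      rw [heq] at this
      rw [real_inner_comm]
      exact this
  -- identify the derivative with ⟪v, H x⟫
  have hint_eq : (∫ p in ({x}ᶜ : Set (EuclideanSpace ℝ (Fin n))), ⟪v, G p⟫ ∂μ) = ⟪v, H x⟫ := by
    rw [hH, ← hG]
    exact integral_inner hGint v
  rw [hint_eq] at hmain
  -- decomposition of f
  have hdecomp : ∀ t : ℝ, f (x + t • v)
      = (∫ p in ({x}ᶜ : Set (EuclideanSpace ℝ (Fin n))), ‖x + t • v - p‖ ∂μ) + c * (|t| * ‖v‖) := by
    intro t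
    rw [hf]
    have hsplit := integral_add_compl (MeasurableSet.singleton x)
      (hInt (x + t • v))
    rw [← hsplit, integral_singleton]
    have : ‖x + t • v - x‖ = |t| * ‖v‖ := by
      rw [add_sub_cancel_left, norm_smul, Real.norm_eq_abs]
    rw [this]
    ring_nf
    rw [hc, measureReal_def]
  -- right derivative of t ↦ c * (|t| * ‖v‖)
  have hlin : HasDerivAt (fun t : ℝ => c * (t * ‖v‖)) (c * ‖v‖) 0 := by
    simpa using ((hasDerivAt_id (0 : ℝ)).mul_const ‖v‖).const_mul c
  have hlin' : HasDerivAt (fun t : ℝ => c * (-t * ‖v‖)) (-(c * ‖v‖)) 0 := by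
    have := ((hasDerivAt_id (0 : ℝ)).neg.mul_const ‖v‖).const_mul c
    simpa using this
  have hright : HasDerivWithinAt (fun t : ℝ => c * (|t| * ‖v‖)) (c * ‖v‖) (Set.Ici 0) 0 := by
    refine hlin.hasDerivWithinAt.congr (fun t ht => ?_) (by simp)
    rw [abs_of_nonneg ht]
  have hleft : HasDerivWithinAt (fun t : ℝ => c * (|t| * ‖v‖)) (-(c * ‖v‖)) (Set.Iic 0) 0 := by
    refine hlin'.hasDerivWithinAt.congr (fun t ht => ?_) (by simp)
    rw [abs_of_nonpos ht]
  constructor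
  · have := hmain.hasDerivWithinAt.add hright
    exact this.congr (fun t _ => hdecomp t) (hdecomp 0)
  · have := hmain.hasDerivWithinAt.add hleft
    have h2 : ⟪v, H x⟫ + -(c * ‖v‖) = ⟪v, H x⟫ - c * ‖v‖ := by ring
    rw [h2] at this
    exact this.congr (fun t _ => hdecomp t) (hdecomp 0)
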